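/- Let G be a metrizable abelian topological group. Then the Pontryagin dual Ĝ of G is hemicompact and a k-space. -/

import Mathlib

open Filter Topology Set Real Pointwise

namespace Stmt15Aux

noncomputable def Vc (k : ℕ) : Set Circle := Circle.exp '' {x : ℝ | |x| ≤ π / 2 ^ (k + 1)}

lemma pi_div_pow_le {k : ℕ} : π / 2 ^ (k + 1) ≤ π / 2 :=
  div_le_div_of_nonneg_left pi_nonneg two_pos (by exact_mod_cast le_self_pow₀ one_le_two k.succ_ne_zero)

lemma mem_Vc {k : ℕ} {z : Circle} : z ∈ Vc k ↔ |Complex.arg z| ≤ π / 2 ^ (k + 1) := by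
  refine ⟨?_, fun hx ↦ ⟨Complex.arg z, hx, Circle.exp_arg z⟩⟩
  rintro ⟨t, ht : |t| ≤ _, rfl⟩
  have ht2 : |t| ≤ π / 2 := ht.trans pi_div_pow_le
  have h1 : -π < t := by nlinarith [abs_le.mp ht2, pi_pos]
  have h2 : t ≤ π := by nlinarith [abs_le.mp ht2, pi_pos]
  rwa [Circle.arg_exp h1 h2]

lemma isCompact_Vc (k : ℕ) : IsCompact (Vc k) := by
  have : {x : ℝ | |x| ≤ π / 2 ^ (k + 1)} = Set.Icc (-(π / 2 ^ (k+1))) (π / 2 ^ (k+1)) := by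
    ext x; simp [abs_le]
  rw [Vc, this]
  exact (isCompact_Icc).image Circle.exp.continuous

lemma isClosed_Vc (k : ℕ) : IsClosed (Vc k) := (isCompact_Vc k).isClosed

lemma one_mem_Vc (k : ℕ) : 1 ∈ Vc k := by
  rw [mem_Vc]
  simp only [Circle.coe_one, Complex.arg_one, abs_zero]
  positivity

lemma Vc_doubling {k : ℕ} {z : Circle} (h1 : z ∈ Vc k) (h2 : z * z ∈ Vc k) : z ∈ Vc (k + 1) := by
  rw [mem_Vc] at h1 h2 ⊢
  by_cases hc : Complex.arg z = -(π / 2)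
  · exfalso
    have hz : z = Circle.exp (-(π/2)) := by rw [← hc, Circle.exp_arg]
    have hzz : (↑(z * z) : ℂ) = -1 := by
      rw [hz, ← Circle.exp_add]
      ring_nf
      rw [Circle.coe_exp]
      simp [Complex.exp_neg, Complex.exp_pi_mul_I]
    rw [hzz, Complex.arg_neg_one, abs_of_pos pi_pos] at h2
    have := h2.trans pi_div_pow_le
    nlinarith [pi_pos]
  · have hne : (z : ℂ) ≠ 0 := Circle.coe_ne_zero z
    have hmem : Complex.arg z + Complex.arg z ∈ Set.Ioc (-π) π := by
      have h' := abs_le.mp (h1.trans pi_div_pow_le)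
      constructor
      · rcases lt_or_eq_of_le h'.1 with h | h
        · linarith
        · exact absurd h.symm hc
      · linarith
    rw [Circle.coe_mul, Complex.arg_mul hne hne hmem] at h2
    rw [← two_mul, abs_mul, abs_two] at h2
    rw [pow_succ, ← div_div]
    linarith [abs_nonneg (Complex.arg z)]

/-- The closed arcs form a neighborhood basis of `1` in the circle. -/
lemma hasBasis_Vc : (𝓝 (1 : Circle)).HasBasis (fun _ : ℕ ↦ True) Vc := by
  have h0 : (𝓝 (0 : ℝ)).HasBasis (fun _ : ℕ ↦ True) (fun k ↦ {x : ℝ | |x| ≤ π / 2 ^ (k + 1)}) := by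
    refine (nhds_basis_zero_abs_lt ℝ).to_hasBasis (fun ε hε ↦ ⟨Nat.ceil (π / ε), trivial, fun t ht ↦ ?_⟩)
      (fun k _ ↦ ⟨π / 2 ^ (k + 1), by positivity, fun x (hx : |x| < _) ↦ hx.le⟩)
    simp only [Set.mem_setOf_eq] at ht ⊢
    refine lt_of_le_of_lt ht ?_
    rw [div_lt_iff₀ (pow_pos two_pos _), ← div_lt_iff₀' hε]
    refine (Nat.le_ceil (π / ε)).trans_lt ?_
    exact_mod_cast (Nat.lt_two_pow_self (n := Nat.ceil (π / ε))).trans_le (pow_le_pow_right₀ one_le_two (Nat.le_succ _))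
  rw [← Circle.exp_zero, ← isLocalHomeomorph_circleExp.map_nhds_eq 0]
  exact h0.map Circle.exp

lemma pow_escape {z : Circle} (h : ∀ n : ℕ, (0:ℝ) ≤ ((z ^ n : Circle) : ℂ).re) : z = 1 := by
  by_contra hz
  set θ := Complex.arg z with hθ
  have hmem := Complex.arg_mem_Ioc (z : ℂ)
  have hθ0 : θ ≠ 0 := fun h0 ↦ hz (by rw [← Circle.exp_arg z, ← hθ, h0, Circle.exp_zero])
  have hcos : ∀ n : ℕ, (0:ℝ) ≤ Real.cos (n * θ) := by
    intro n
    have hz' : (z : ℂ) = Complex.exp (θ * Complex.I) := by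
      conv_lhs => rw [← Circle.exp_arg z, Circle.coe_exp, ← hθ]
    have hzn : ((z ^ n : Circle) : ℂ) = Complex.exp ((n * θ : ℝ) * Complex.I) := by
      rw [show ((z ^ n : Circle) : ℂ) = (z:ℂ)^n from by norm_cast, hz', ← Complex.exp_nat_mul]
      push_cast
      ring_nf
    have := h n
    rw [hzn] at this
    rwa [Complex.exp_ofReal_mul_I_re] at this
  set φ := |θ| with hφ
  have hφpos : 0 < φ := abs_pos.mpr hθ0
  have hφle : φ ≤ π := by
    rcases abs_cases θ with ⟨h1, _⟩ | ⟨h1, h2⟩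
    · rw [hφ, h1]; exact hmem.2
    · rw [hφ, h1]; linarith [hmem.1]
  have hcos' : ∀ n : ℕ, (0:ℝ) ≤ Real.cos (n * φ) := by
    intro n
    rcases abs_cases θ with ⟨h1, _⟩ | ⟨h1, _⟩
    · rw [hφ, h1]; exact hcos n
    · rw [hφ, h1, mul_neg, Real.cos_neg]; exact hcos n
  -- find n with cos (n φ) < 0
  rcases le_or_gt φ (π/2) with hsm | hbig
  · set n := Nat.floor ((π/2) / φ) + 1 with hn
    have h1 : π/2 < n * φ := by
      have hlt := Nat.lt_floor_add_one ((π/2) / φ)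
      rw [div_lt_iff₀ hφpos] at hlt
      rw [hn]
      push_cast
      linarith
    have h2 : (n:ℝ) * φ ≤ π/2 + φ := by
      rw [hn]
      push_cast
      have := Nat.floor_le (a := (π/2)/φ) (by positivity)
      rw [le_div_iff₀ hφpos] at this
      linarith
    have : Real.cos (n * φ) < 0 :=
      Real.cos_neg_of_pi_div_two_lt_of_lt h1 (by nlinarith [pi_pos])
    linarith [hcos' n]
  · have : Real.cos (1 * φ) < 0 := by
      rw [one_mul]
      exact Real.cos_neg_of_pi_div_two_lt_of_lt hbig (by nlinarith [pi_pos])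
    have h := hcos' 1
    push_cast at h
    linarith


section TopAux
variable {X : Type*} [TopologicalSpace X]

lemma isCompact_insert_of_tail (a : X) (T : Set X)
    (h : ∀ N ∈ 𝓝 a, (T \ N).Finite) : IsCompact (insert a T) := by
  refine isCompact_of_finite_subcover fun {ι} O hO hcov ↦ ?_
  obtain ⟨i0, hi0⟩ := mem_iUnion.mp (hcov (mem_insert a T))
  have hfin : (T \ O i0).Finite := h (O i0) ((hO i0).mem_nhds hi0)
  have hsel : ∀ x : X, x ∈ T \ O i0 → ∃ i, x ∈ O i :=
    fun x hx ↦ mem_iUnion.mp (hcov (mem_insert_of_mem _ hx.1))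
  choose g hg using hsel
  classical
  refine ⟨insert i0 (hfin.toFinset.attach.image
    (fun x ↦ g x.1 (hfin.mem_toFinset.mp x.2))), fun x hx ↦ ?_⟩
  by_cases hxi : x ∈ O i0
  · exact mem_biUnion (Finset.mem_insert_self _ _) hxi
  · rcases hx with rfl | hxT
    · exact absurd hi0 hxi
    · have hxd : x ∈ T \ O i0 := ⟨hxT, hxi⟩
      refine mem_biUnion (Finset.mem_insert_of_mem ?_) (hg x hxd)
      exact Finset.mem_image.mpr ⟨⟨x, hfin.mem_toFinset.mpr hxd⟩, Finset.mem_attach _ _, rfl⟩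

end TopAux

section GAux
variable {G : Type*} [CommGroup G] [TopologicalSpace G] [IsTopologicalGroup G]

lemma exists_U [FirstCountableTopology G] :
    ∃ U : ℕ → Set G, (∀ n, U n ∈ 𝓝 1) ∧ (∀ n, U (n+1) * U (n+1) ⊆ U n) ∧
      (∀ s ∈ 𝓝 (1:G), ∃ n, U n ⊆ s) := by
  obtain ⟨B, hB⟩ := (𝓝 (1:G)).exists_antitone_basis
  have key : ∀ (n : ℕ) (s : Set G), s ∈ 𝓝 1 → ∃ V : Set G, V ∈ 𝓝 1 ∧ V * V ⊆ s ∩ B (n+1) := by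
    intro n s hs
    obtain ⟨V, hV, hVmul⟩ := exists_nhds_one_split (inter_mem hs (hB.mem (n+1)))
    exact ⟨V, hV, by rintro _ ⟨v, hv, w, hw, rfl⟩; exact hVmul v hv w hw⟩
  let Ua : ℕ → {s : Set G // s ∈ 𝓝 1} := fun n ↦ Nat.rec ⟨B 0, hB.mem 0⟩
    (fun m p ↦ ⟨(key m p.1 p.2).choose, (key m p.1 p.2).choose_spec.1⟩) n
  have hUsucc : ∀ n, (Ua (n+1)).1 * (Ua (n+1)).1 ⊆ (Ua n).1 ∩ B (n+1) :=
    fun n ↦ (key n (Ua n).1 (Ua n).2).choose_spec.2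
  refine ⟨fun n ↦ (Ua n).1, fun n ↦ (Ua n).2, fun n ↦ (hUsucc n).trans inter_subset_left, ?_⟩
  intro s hs
  obtain ⟨i, -, hi⟩ := hB.toHasBasis.mem_iff.mp hs
  refine ⟨i + 1, ?_⟩
  have hsub : (Ua (i+1)).1 ⊆ B (i+1) := by
    intro x hx
    have h1 : (1:G) ∈ (Ua (i+1)).1 := mem_of_mem_nhds (Ua (i+1)).2
    simpa using (hUsucc i (mul_mem_mul hx h1)).2
  exact hsub.trans ((hB.antitone (Nat.le_succ i)).trans hi)

end GAux


section Dual
variable {G : Type*} [CommGroup G] [TopologicalSpace G] [IsTopologicalGroup G]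

lemma isCompact_polarK (U : ℕ → Set G) (hU1 : ∀ n, U n ∈ 𝓝 1)
    (hU2 : ∀ n, U (n+1) * U (n+1) ⊆ U n) (n : ℕ) :
    IsCompact {ψ : PontryaginDual G | Set.MapsTo ψ (U n) (Vc 0)} := by
  have hU3 : ∀ m, U (m+1) ⊆ U m := by
    intro m x hx
    have h1 : (1:G) ∈ U (m+1) := mem_of_mem_nhds (hU1 _)
    simpa using hU2 m (mul_mem_mul hx h1)
  have hmaps : ∀ f : G →* Circle, Set.MapsTo f (U n) (Vc 0) →
      ∀ k, Set.MapsTo f (U (n+k)) (Vc k) := by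
    intro f hf k
    induction k with
    | zero => simpa using hf
    | succ k ih =>
      intro x hx
      have hx1 : x ∈ U (n+k) := hU3 _ hx
      have hx2 : x * x ∈ U (n+k) := hU2 _ (mul_mem_mul hx hx)
      exact Vc_doubling (ih hx1) (by rw [← map_mul]; exact ih hx2)
  have h : EquicontinuousAt (fun f : {f : G →* Circle | Set.MapsTo f (U n) (Vc 0)} ↦
      (f : G → Circle)) 1 := by
    rw [hasBasis_Vc.uniformity_of_nhds_one.equicontinuousAt_iff_right]
    refine fun k _ ↦ Filter.eventually_iff_exists_mem.mpr ⟨U (n+k), hU1 _, fun x hx ⟨f, hf⟩ ↦ ?_⟩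
    rw [Set.mem_setOf_eq, map_one, div_one]
    exact hmaps f hf k hx
  replace h := equicontinuous_of_equicontinuousAt_one _ h
  let S1 : Set (G →* Circle) := {f | Set.MapsTo f (U n) (Vc 0)}
  replace h : Equicontinuous ((↑) : S1 → G → Circle) := h.comp (Subtype.map _root_.id fun f hf ↦ hf)
  let S2 : Set (ContinuousMonoidHom G Circle) := {f | Set.MapsTo f (U n) (Vc 0)}
  let S3 : Set C(G, Circle) := (↑) '' S2
  let S4 : Set (G → Circle) := (↑) '' S3
  have hS4 : S4 = (↑) '' S1 := by
    ext f
    constructor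
    · rintro ⟨-, ⟨g, hg, rfl⟩, rfl⟩
      exact ⟨g, hg, rfl⟩
    · rintro ⟨g, hg, rfl⟩
      exact ⟨⟨g, h.continuous ⟨g, hg⟩⟩, ⟨⟨g, h.continuous ⟨g, hg⟩⟩, hg, rfl⟩, rfl⟩
  have h3 : Equicontinuous ((↑) : S3 → G → Circle) := by
    rw [equicontinuous_iff_range, ← Set.image_eq_range] at h ⊢
    rwa [← hS4] at h
  have hS4' : S4 = Set.pi (U n) (fun _ ↦ Vc 0) ∩ Set.range ((↑) : (G →* Circle) → (G → Circle)) := by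
    simp_rw [hS4, Set.ext_iff, Set.mem_image, S1, Set.mem_setOf_eq]
    exact fun f ↦ ⟨fun ⟨g, hg, hf⟩ ↦ hf ▸ ⟨hg, g, rfl⟩, fun ⟨hg, g, hf⟩ ↦ ⟨g, hf ▸ hg, hf⟩⟩
  have hS4c : IsClosed S4 :=
    hS4'.symm ▸ (isClosed_set_pi (fun _ _ ↦ isClosed_Vc 0)).inter (MonoidHom.isClosed_range_coe G Circle)
  exact (ContinuousMonoidHom.isInducing_toContinuousMap G Circle).isCompact_iff.mpr
    (ArzelaAscoli.isCompact_of_equicontinuous S3 hS4c.isCompact h3)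

lemma Vc0_re {z : Circle} (h : z ∈ Vc 0) : 0 ≤ (z : ℂ).re := by
  rw [mem_Vc] at h
  rw [← Complex.abs_arg_le_pi_div_two_iff]
  simpa using h

lemma mem_Vc0_of_re {z : Circle} (h : 0 < (z : ℂ).re) : z ∈ Vc 0 := by
  rw [mem_Vc]
  have := Complex.abs_arg_le_pi_div_two_iff.mpr h.le
  simpa using this

lemma isOpen_O0 : IsOpen {z : Circle | 0 < (z : ℂ).re} :=
  isOpen_lt continuous_const (Complex.continuous_re.comp continuous_induced_dom)

lemma one_mem_O0 : (1 : Circle) ∈ {z : Circle | 0 < (z : ℂ).re} := by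
  simp [Circle.coe_one]

lemma continuous_evalP (x : G) : Continuous fun ψ : PontryaginDual G ↦ ψ x := by
  have h := (continuous_eval_const x).comp
    (ContinuousMonoidHom.isInducing_toContinuousMap G Circle).continuous
  exact h

lemma psi_eq_one {ψ : PontryaginDual G} (h : ∀ x : G, ψ x ∈ Vc 0) : ψ = 1 := by
  refine DFunLike.ext _ _ fun x ↦ ?_
  refine pow_escape fun n ↦ ?_
  have : (ψ x) ^ n = ψ (x ^ n) := (map_pow ψ x n).symm
  rw [this]
  exact Vc0_re (h _)

lemma coverage (U : ℕ → Set G) (hUb : ∀ s ∈ 𝓝 (1:G), ∃ n, U n ⊆ s) (ψ : PontryaginDual G) :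
    ∃ n, Set.MapsTo ψ (U n) (Vc 0) := by
  have hcont : Continuous ψ := map_continuous ψ
  have hnb : (⇑ψ) ⁻¹' {z : Circle | 0 < (z : ℂ).re} ∈ 𝓝 (1:G) := by
    refine hcont.continuousAt.preimage_mem_nhds ?_
    rw [map_one]
    exact isOpen_O0.mem_nhds one_mem_O0
  obtain ⟨n, hn⟩ := hUb _ hnb
  exact ⟨n, fun x hx ↦ mem_Vc0_of_re (hn hx)⟩

/-- The polar-type neighborhood of `1` given by a compact set. -/
lemma isOpen_polarO (S : Set G) (hS : IsCompact S) :
    IsOpen {ψ : PontryaginDual G | Set.MapsTo ψ S {z : Circle | 0 < (z : ℂ).re}} :=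
  isOpen_induced (ContinuousMap.isOpen_setOf_mapsTo hS isOpen_O0)

lemma isClosed_polar (S : Set G) : IsClosed {ψ : PontryaginDual G | Set.MapsTo ψ S (Vc 0)} := by
  have : {ψ : PontryaginDual G | Set.MapsTo ψ S (Vc 0)} =
      ⋂ x ∈ S, {ψ : PontryaginDual G | ψ x ∈ Vc 0} := by
    ext ψ; simp [Set.MapsTo]
  rw [this]
  exact isClosed_biInter fun x _ ↦ (isClosed_Vc 0).preimage (continuous_evalP x)

lemma hemicompact_aux (U : ℕ → Set G) (hU1 : ∀ n, U n ∈ 𝓝 1)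
    (hU2 : ∀ n, U (n+1) * U (n+1) ⊆ U n) (hUb : ∀ s ∈ 𝓝 (1:G), ∃ n, U n ⊆ s)
    (C : Set (PontryaginDual G)) (hC : IsCompact C) :
    ∃ n, C ⊆ {ψ : PontryaginDual G | Set.MapsTo ψ (U n) (Vc 0)} := by
  have hU3 : ∀ m, U (m+1) ⊆ U m := by
    intro m x hx
    have h1 : (1:G) ∈ U (m+1) := mem_of_mem_nhds (hU1 _)
    simpa using hU2 m (mul_mem_mul hx h1)
  have hU3' : ∀ {a b : ℕ}, a ≤ b → U b ⊆ U a := by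
    intro a b hab
    induction hab with
    | refl => exact le_refl _
    | step _ ih => exact (hU3 _).trans ih
  by_contra hcon
  push_neg at hcon
  have hsel : ∀ n, ∃ ψ ∈ C, ∃ x ∈ U n, ψ x ∉ Vc 0 := by
    intro n
    obtain ⟨ψ, hψC, hψ⟩ := Set.not_subset.mp (hcon n)
    rw [Set.mem_setOf_eq, Set.MapsTo] at hψ
    push_neg at hψ
    obtain ⟨x, hx1, hx2⟩ := hψ
    exact ⟨ψ, hψC, x, hx1, hx2⟩
  choose ψ hψC x hx hbad using hsel
  -- the tails of the sequence x, with 1 inserted, are compact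
  have hTail : ∀ m : ℕ, IsCompact (insert (1:G) (x '' Set.Ici m)) := by
    intro m
    refine isCompact_insert_of_tail _ _ fun N hN ↦ ?_
    obtain ⟨j, hj⟩ := hUb N hN
    refine ((Set.finite_Icc m (m + j)).image x).subset ?_
    rintro _ ⟨⟨i, hi, rfl⟩, hout⟩
    refine Set.mem_image_of_mem x ⟨hi, ?_⟩
    by_contra hgt
    push_neg at hgt
    exact hout (hj (hU3' (by omega) (hx i)))
  set O0 : Set Circle := {z : Circle | 0 < (z : ℂ).re}
  set B : ℕ → Set (PontryaginDual G) :=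
    fun m ↦ {ψ : PontryaginDual G | Set.MapsTo ψ (insert (1:G) (x '' Set.Ici m)) O0} with hB
  have hBopen : ∀ m, IsOpen (B m) := fun m ↦ isOpen_polarO _ (hTail m)
  have hBcover : C ⊆ ⋃ m, B m := by
    intro φ hφ
    have hcont : Continuous φ := map_continuous φ
    have hnb : (⇑φ) ⁻¹' O0 ∈ 𝓝 (1:G) := by
      refine hcont.continuousAt.preimage_mem_nhds ?_
      rw [map_one]
      exact isOpen_O0.mem_nhds one_mem_O0
    obtain ⟨m, hm⟩ := hUb _ hnb
    refine Set.mem_iUnion.mpr ⟨m, ?_⟩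
    rintro _ (rfl | ⟨i, hi, rfl⟩)
    · rw [map_one]; exact one_mem_O0
    · exact hm (hU3' hi (hx i))
  obtain ⟨t, ht⟩ := hC.elim_finite_subcover B hBopen hBcover
  have hBmono : ∀ {a b : ℕ}, a ≤ b → B a ⊆ B b := by
    intro a b hab φ hφ
    exact fun y hy ↦ hφ (by rcases hy with rfl | ⟨i, hi, rfl⟩
                            exacts [Set.mem_insert _ _,
                              Set.mem_insert_of_mem _ ⟨i, le_trans hab hi, rfl⟩])
  rcases t.eq_empty_or_nonempty with rfl | htne
  · simpa using ht (hψC 0)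
  · obtain ⟨m, hmt, hmax⟩ := t.exists_max_image id htne
    have hCB : C ⊆ B m := by
      intro φ hφ
      obtain ⟨i, hi, hφi⟩ := Set.mem_iUnion₂.mp (ht hφ)
      exact hBmono (hmax i hi) hφi
    have := hCB (hψC m) (Set.mem_insert_of_mem _ ⟨m, le_refl m, rfl⟩)
    exact hbad m (mem_Vc0_of_re this)

lemma kclosed_aux (U : ℕ → Set G) (hU1 : ∀ n, U n ∈ 𝓝 1)
    (hU2 : ∀ n, U (n+1) * U (n+1) ⊆ U n) (hUb : ∀ s ∈ 𝓝 (1:G), ∃ n, U n ⊆ s)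
    (C : Set (PontryaginDual G))
    (hCc : ∀ Kc : Set (PontryaginDual G), IsCompact Kc → IsCompact (C ∩ Kc))
    (h1 : (1 : PontryaginDual G) ∈ closure C) : (1 : PontryaginDual G) ∈ C := by
  classical
  have hU3 : ∀ m, U (m+1) ⊆ U m := by
    intro m x hx
    have hone : (1:G) ∈ U (m+1) := mem_of_mem_nhds (hU1 _)
    simpa using hU2 m (mul_mem_mul hx hone)
  have hU3' : ∀ {a b : ℕ}, a ≤ b → U b ⊆ U a := by
    intro a b hab
    induction hab with
    | refl => exact le_refl _
    | step _ ih => exact (hU3 _).trans ih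
  by_contra h1n
  set K : ℕ → Set (PontryaginDual G) := fun n ↦ {ψ | Set.MapsTo ψ (U n) (Vc 0)} with hK
  have hKcomp : ∀ n, IsCompact (K n) := isCompact_polarK U hU1 hU2
  set pol : Finset G → Set (PontryaginDual G) :=
    fun F ↦ {ψ | Set.MapsTo ψ (F : Set G) (Vc 0)} with hpol
  have hpolc : ∀ F, IsClosed (pol F) := fun F ↦ isClosed_polar _
  have base : ∃ F : Finset G, pol F ∩ K 0 ∩ C = ∅ := by
    have hs : IsCompact (C ∩ K 0) := hCc _ (hKcomp 0)
    have hempty : (C ∩ K 0) ∩ ⋂ x : G, {ψ : PontryaginDual G | ψ x ∈ Vc 0} = ∅ := by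
      rw [Set.eq_empty_iff_forall_notMem]
      rintro ψ ⟨⟨hψC, -⟩, hψall⟩
      rw [Set.mem_iInter] at hψall
      exact h1n ((psi_eq_one fun x ↦ hψall x) ▸ hψC)
    obtain ⟨u, hu⟩ := hs.elim_finite_subfamily_closed _
      (fun x : G ↦ (isClosed_Vc 0).preimage (continuous_evalP x)) hempty
    refine ⟨u, ?_⟩
    rw [Set.eq_empty_iff_forall_notMem]
    rintro ψ ⟨⟨hpolψ, hK0⟩, hCψ⟩
    rw [Set.eq_empty_iff_forall_notMem] at hu
    exact hu ψ ⟨⟨hCψ, hK0⟩, Set.mem_iInter₂.mpr fun x hxu ↦ hpolψ (by exact_mod_cast hxu)⟩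
  have step : ∀ (n : ℕ) (F : Finset G), pol F ∩ K n ∩ C = ∅ →
      ∃ F' : Finset G, ↑F' ⊆ U n ∧ pol (F ∪ F') ∩ K (n+1) ∩ C = ∅ := by
    intro n F hF
    have hs : IsCompact ((C ∩ K (n+1)) ∩ pol F) :=
      (hCc _ (hKcomp (n+1))).inter_right (hpolc F)
    have hempty : ((C ∩ K (n+1)) ∩ pol F) ∩
        ⋂ x : ↥(U n), {ψ : PontryaginDual G | ψ ↑x ∈ Vc 0} = ∅ := by
      rw [Set.eq_empty_iff_forall_notMem]
      rintro ψ ⟨⟨⟨hψC, -⟩, hψF⟩, hψall⟩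
      rw [Set.mem_iInter] at hψall
      have hψKn : ψ ∈ K n := fun x hx ↦ hψall ⟨x, hx⟩
      rw [Set.eq_empty_iff_forall_notMem] at hF
      exact hF ψ ⟨⟨hψF, hψKn⟩, hψC⟩
    obtain ⟨u, hu⟩ := hs.elim_finite_subfamily_closed
      (fun x : ↥(U n) ↦ {ψ : PontryaginDual G | ψ ↑x ∈ Vc 0})
      (fun x ↦ (isClosed_Vc 0).preimage (continuous_evalP (↑x : G))) hempty
    refine ⟨u.image Subtype.val, ?_, ?_⟩
    · intro y hy
      obtain ⟨x, -, rfl⟩ := Finset.mem_image.mp (by exact_mod_cast hy)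
      exact x.2
    · rw [Set.eq_empty_iff_forall_notMem]
      rintro ψ ⟨⟨hpolψ, hK1⟩, hCψ⟩
      rw [Set.eq_empty_iff_forall_notMem] at hu
      refine hu ψ ⟨⟨⟨hCψ, hK1⟩, fun y hy ↦ hpolψ ?_⟩, Set.mem_iInter₂.mpr fun x hxu ↦ hpolψ ?_⟩
      · exact_mod_cast Finset.mem_union_left _ (by exact_mod_cast hy)
      · exact_mod_cast Finset.mem_union_right _ (Finset.mem_image_of_mem Subtype.val hxu)
  let Acc : ∀ n : ℕ, {F : Finset G // pol F ∩ K n ∩ C = ∅} := fun n ↦ Nat.rec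
    (motive := fun n ↦ {F : Finset G // pol F ∩ K n ∩ C = ∅})
    ⟨base.choose, base.choose_spec⟩
    (fun m p ↦ ⟨p.1 ∪ (step m p.1 p.2).choose, (step m p.1 p.2).choose_spec.2⟩) n
  have hAsucc : ∀ n, (Acc (n+1)).1 = (Acc n).1 ∪ (step n (Acc n).1 (Acc n).2).choose :=
    fun n ↦ rfl
  have hAmono : ∀ {a b : ℕ}, a ≤ b → (Acc a).1 ⊆ (Acc b).1 := by
    intro a b hab
    induction hab with
    | refl => exact Finset.Subset.refl _
    | step _ ih =>
      refine ih.trans ?_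
      rw [hAsucc]
      exact Finset.subset_union_left
  have hAstep : ∀ n, ((Acc (n+1)).1 : Set G) ⊆ ↑(Acc n).1 ∪ U n := by
    intro n y hy
    rw [hAsucc] at hy
    rcases Finset.mem_union.mp (by exact_mod_cast hy) with h | h
    · exact Or.inl (by exact_mod_cast h)
    · exact Or.inr ((step n (Acc n).1 (Acc n).2).choose_spec.1 h)
  set T : Set G := ⋃ n, ((Acc n).1 : Set G) with hT
  have hScomp : IsCompact (insert (1:G) T) := by
    refine isCompact_insert_of_tail _ _ fun N hN ↦ ?_
    obtain ⟨m, hm⟩ := hUb N hN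
    have hsub : ∀ k, ((Acc (m+1+k)).1 : Set G) ⊆ ↑(Acc (m+1)).1 ∪ N := by
      intro k
      induction k with
      | zero => simp
      | succ k ih =>
        have : m + 1 + (k+1) = (m+1+k) + 1 := by omega
        rw [this]
        refine (hAstep (m+1+k)).trans ?_
        refine Set.union_subset ih ?_
        exact (hU3' (by omega : m ≤ m+1+k)).trans hm |>.trans (Set.subset_union_right)
    refine ((Acc (m+1)).1.finite_toSet).subset ?_
    rintro y ⟨hyT, hyN⟩
    obtain ⟨n, hn⟩ := Set.mem_iUnion.mp hyT
    rcases le_or_gt n (m+1) with h | h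
    · exact hAmono h (by exact_mod_cast hn)
    · have he : m + 1 + (n - (m+1)) = n := by omega
      rcases hsub (n - (m+1)) (by rw [he]; exact hn) with h' | h'
      · exact h'
      · exact absurd h' hyN
  set O0 : Set Circle := {z : Circle | 0 < (z : ℂ).re} with hO0
  set W' : Set (PontryaginDual G) :=
    {ψ : PontryaginDual G | Set.MapsTo ψ (insert (1:G) T) O0} with hW'
  have hW'open : IsOpen W' := isOpen_polarO _ hScomp
  have h1W' : (1 : PontryaginDual G) ∈ W' := by
    intro y hy
    have : (1 : PontryaginDual G) y = 1 := rfl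
    rw [Set.mem_setOf_eq, this]
    exact one_mem_O0
  have hWC : W' ∩ C = ∅ := by
    rw [Set.eq_empty_iff_forall_notMem]
    rintro ψ ⟨hψW, hψC⟩
    obtain ⟨n, hn⟩ := coverage U hUb ψ
    have hψpol : ψ ∈ pol (Acc n).1 := by
      intro y hy
      have hyT : y ∈ insert (1:G) T :=
        Set.mem_insert_of_mem _ (Set.mem_iUnion.mpr ⟨n, by exact_mod_cast hy⟩)
      exact mem_Vc0_of_re (hψW hyT)
    have := (Acc n).2
    rw [Set.eq_empty_iff_forall_notMem] at this
    exact this ψ ⟨⟨hψpol, hn⟩, hψC⟩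
  obtain ⟨φ, hφ⟩ := mem_closure_iff.mp h1 W' hW'open h1W'
  rw [Set.eq_empty_iff_forall_notMem] at hWC
  exact hWC φ hφ

lemma compact_inter_of_closed_preimage (C : Set (PontryaginDual G))
    (hC : ∀ Kc : Set (PontryaginDual G), IsCompact Kc →
      IsClosed ((↑·) ⁻¹' C : Set Kc))
    (Kc : Set (PontryaginDual G)) (hKc : IsCompact Kc) : IsCompact (C ∩ Kc) := by
  haveI := isCompact_iff_compactSpace.mp hKc
  have h := ((hC Kc hKc).isCompact).image continuous_subtype_val
  rwa [Set.image_preimage_eq_inter_range, Subtype.range_coe] at h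

end Dual

end Stmt15Aux

open Stmt15Aux

/-- A hemicompact space. -/
def Hemicompact (X : Type*) [TopologicalSpace X] : Prop :=
  ∃ K : ℕ → Set X, (∀ n, IsCompact (K n)) ∧ ∀ C : Set X, IsCompact C → ∃ n, C ⊆ K n

/-- A k-space: a set is closed as soon as its intersection with every compact set `K`
is closed in `K`. -/
def KSpace (X : Type*) [TopologicalSpace X] : Prop :=
  ∀ C : Set X, (∀ K : Set X, IsCompact K → IsClosed ((↑·) ⁻¹' C : Set K)) → IsClosed C

theorem stmt15 {G : Type*} [CommGroup G] [TopologicalSpace G] [IsTopologicalGroup G]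
    [TopologicalSpace.MetrizableSpace G] :
    Hemicompact (PontryaginDual G) ∧ KSpace (PontryaginDual G) := by
  letI := TopologicalSpace.metrizableSpaceMetric G
  obtain ⟨U, hU1, hU2, hUb⟩ := exists_U (G := G)
  constructor
  · exact ⟨fun n ↦ {ψ : PontryaginDual G | Set.MapsTo ψ (U n) (Vc 0)},
      fun n ↦ isCompact_polarK U hU1 hU2 n,
      fun C hC ↦ hemicompact_aux U hU1 hU2 hUb C hC⟩
  · intro C hC
    refine isClosed_of_closure_subset fun g hg ↦ ?_
    set C' : Set (PontryaginDual G) := (fun ψ ↦ ψ * g⁻¹) '' C with hC'def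
    have hC'eq : ∀ Kc : Set (PontryaginDual G),
        C' ∩ Kc = (fun ψ ↦ ψ * g⁻¹) '' (C ∩ (fun ψ ↦ ψ * g) '' Kc) := by
      intro Kc
      ext φ
      constructor
      · rintro ⟨⟨c, hc, rfl⟩, hφK⟩
        exact ⟨c, ⟨hc, ⟨c * g⁻¹, hφK, by group⟩⟩, rfl⟩
      · rintro ⟨c, ⟨hc, ⟨k, hk, hkc⟩⟩, rfl⟩
        refine ⟨⟨c, hc, rfl⟩, ?_⟩
        show c * g⁻¹ ∈ Kc
        have : c * g⁻¹ = k := by rw [← hkc]; group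
        rw [this]; exact hk
    have hCc' : ∀ Kc : Set (PontryaginDual G), IsCompact Kc → IsCompact (C' ∩ Kc) := by
      intro Kc hKc
      rw [hC'eq]
      refine IsCompact.image ?_ (continuous_id.mul continuous_const)
      refine compact_inter_of_closed_preimage C hC _ ?_
      exact hKc.image (continuous_id.mul continuous_const)
    have h1c : (1 : PontryaginDual G) ∈ closure C' := by
      have := image_closure_subset_closure_image
        (f := fun ψ : PontryaginDual G ↦ ψ * g⁻¹) (s := C) (continuous_id.mul continuous_const)
      have hmem : g * g⁻¹ ∈ closure C' := this ⟨g, hg, rfl⟩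
      rwa [mul_inv_cancel] at hmem
    have h1C' := kclosed_aux U hU1 hU2 hUb C' hCc' h1c
    obtain ⟨c, hc, hcg⟩ := h1C'
    have : c = g := by
      have := mul_inv_eq_one.mp hcg
      exact this
    rwa [this] at hc
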